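/- Let X and Y be real-valued random variables with cumulative distribution functions F_X and F_Y (nondecreasing and right-continuous), and quantile functions Q_X(q) := inf { t : ℝ | F_X(t) ≥ q }, Q_Y(q) := inf { t : ℝ | F_Y(t) ≥ q }. Let q_1 < q_2 < ... < q_m be quantile levels in (0,1) with m ≥ 2. Assume that for each i with 1 ≤ i < m the set { k | 1 ≤ k ≤ m ∧ Q_Y(q_k) ≥ Q_X(q_{i+1}) } is nonempty, and let β(i) be its minimum. Define the estimated upper violation ε̃_u := max over 1 ≤ i < m of (q_{β(i)} − q_i). Then for every x ∈ ℝ with Q_X(q_1) ≤ x and x < Q_X(q_m), the true violation satisfies F_Y(x) − F_X(x) < ε̃_u. -/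

import Mathlib

open MeasureTheory Filter Topology

lemma cdf_quantile_iff (μ : Measure ℝ) [IsProbabilityMeasure μ] (F : ℝ → ℝ)
    (hF : F = fun t => (μ (Set.Iic t)).toReal) (p : ℝ) (hp0 : 0 < p) (hp1 : p < 1) (x : ℝ) :
    p ≤ F x ↔ sInf {t : ℝ | p ≤ F t} ≤ x := by
  have hFc : F = ⇑(ProbabilityTheory.cdf μ) := by
    rw [hF]; ext t; exact (ProbabilityTheory.cdf_eq_real μ t).symm
  subst hFc
  set F := ⇑(ProbabilityTheory.cdf μ)
  set S := {t : ℝ | p ≤ F t} with hS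
  have hmono : Monotone F := ProbabilityTheory.monotone_cdf μ
  have hne : S.Nonempty := by
    obtain ⟨t, ht⟩ := ((ProbabilityTheory.tendsto_cdf_atTop μ).eventually
      (eventually_ge_nhds hp1)).exists
    exact ⟨t, ht⟩
  have hbdd : BddBelow S := by
    have h := (ProbabilityTheory.tendsto_cdf_atBot μ).eventually (eventually_lt_nhds hp0)
    obtain ⟨b, hb⟩ := h.exists
    exact ⟨b, fun s hs => by
      by_contra hlt
      exact absurd (le_trans hs (hmono (le_of_lt (lt_of_not_ge hlt)))) (not_le.mpr hb)⟩
  have hmem : p ≤ F (sInf S) := by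
    have hcl : sInf S ∈ closure S := csInf_mem_closure hne hbdd
    have hsub : S ⊆ Set.Ici (sInf S) := fun s hs => csInf_le hbdd hs
    have hrc : ContinuousWithinAt F (Set.Ici (sInf S)) (sInf S) :=
      (ProbabilityTheory.cdf μ).right_continuous (sInf S)
    have hne2 : (𝓝[S] (sInf S)).NeBot := mem_closure_iff_nhdsWithin_neBot.mp hcl
    have htd : Tendsto F (𝓝[S] (sInf S)) (𝓝 (F (sInf S))) :=
      hrc.mono_left (nhdsWithin_mono _ hsub)
    exact ge_of_tendsto htd (eventually_nhdsWithin_of_forall (fun t ht => ht))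
  constructor
  · exact fun h => csInf_le hbdd h
  · exact fun h => le_trans hmem (hmono h)

/-- **Lemma 2 (the estimated violation bounds the true violation).**
Let `X`, `Y` be real random variables (laws `μX`, `μY`) with CDFs
`F_X(t) = μX((-∞, t])`, `F_Y(t) = μY((-∞, t])` and quantile functions
`Q_X(q) = inf {t | F_X(t) ≥ q}`, `Q_Y(q) = inf {t | F_Y(t) ≥ q}`.
Given quantile levels `q 1 < q 2 < ... < q m` in `(0,1)` with `m ≥ 2`, suppose
for each `1 ≤ i < m` the set `{k | 1 ≤ k ≤ m ∧ Q_Y(q k) ≥ Q_X(q (i+1))}` is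
nonempty with minimum `β i`, and let `ε̃_u` be the maximum over `1 ≤ i < m` of
`q (β i) − q i`. Then for every `x` with `Q_X(q 1) ≤ x < Q_X(q m)`, the true
violation satisfies `F_Y(x) − F_X(x) < ε̃_u`. -/
theorem estimated_violation_bounds_true_violation
    (μX μY : Measure ℝ) [IsProbabilityMeasure μX] [IsProbabilityMeasure μY]
    (FX FY : ℝ → ℝ)
    (hFX : FX = fun t => (μX (Set.Iic t)).toReal)
    (hFY : FY = fun t => (μY (Set.Iic t)).toReal)
    (QX QY : ℝ → ℝ)
    (hQX : ∀ p, 0 < p → p < 1 → QX p = sInf {t : ℝ | p ≤ FX t})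
    (hQY : ∀ p, 0 < p → p < 1 → QY p = sInf {t : ℝ | p ≤ FY t})
    (m : ℕ) (hm : 2 ≤ m)
    (q : ℕ → ℝ)
    (hq_mem : ∀ i, 1 ≤ i → i ≤ m → q i ∈ Set.Ioo (0 : ℝ) 1)
    (hq_mono : ∀ i j, 1 ≤ i → i < j → j ≤ m → q i < q j)
    (β : ℕ → ℕ)
    (hβ_mem : ∀ i, 1 ≤ i → i < m →
      1 ≤ β i ∧ β i ≤ m ∧ QX (q (i + 1)) ≤ QY (q (β i)))
    (hβ_min : ∀ i, 1 ≤ i → i < m →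
      ∀ k, 1 ≤ k → k ≤ m → QX (q (i + 1)) ≤ QY (q k) → β i ≤ k)
    (εu : ℝ)
    (hεu : IsGreatest {e : ℝ | ∃ i, 1 ≤ i ∧ i < m ∧ e = q (β i) - q i} εu) :
    ∀ x : ℝ, QX (q 1) ≤ x → x < QX (q m) → FY x - FX x < εu := by
  intro x hx1 hxm
  -- quantile characterizations
  have hiffX : ∀ i, 1 ≤ i → i ≤ m → ∀ t : ℝ, (q i ≤ FX t ↔ QX (q i) ≤ t) := by
    intro i h1 h2 t
    obtain ⟨hp0, hp1⟩ := hq_mem i h1 h2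
    rw [hQX _ hp0 hp1]
    exact cdf_quantile_iff μX FX hFX _ hp0 hp1 t
  have hiffY : ∀ i, 1 ≤ i → i ≤ m → ∀ t : ℝ, (q i ≤ FY t ↔ QY (q i) ≤ t) := by
    intro i h1 h2 t
    obtain ⟨hp0, hp1⟩ := hq_mem i h1 h2
    rw [hQY _ hp0 hp1]
    exact cdf_quantile_iff μY FY hFY _ hp0 hp1 t
  -- pick the largest i ≤ m with QX (q i) ≤ x
  classical
  set P : ℕ → Prop := fun k => 1 ≤ k ∧ QX (q k) ≤ x with hP
  set i : ℕ := Nat.findGreatest P m with hi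
  have h1m : (1 : ℕ) ≤ m := le_trans (by norm_num) hm
  have hP1 : P 1 := ⟨le_refl 1, hx1⟩
  have hi1 : 1 ≤ i := Nat.le_findGreatest h1m hP1
  have him : i ≤ m := Nat.findGreatest_le m
  have hPi : P i := Nat.findGreatest_spec h1m hP1
  have hiltm : i < m := by
    rcases lt_or_eq_of_le him with h | h
    · exact h
    · exact absurd (h ▸ hPi.2) (not_le.mpr hxm)
  have hnot : ¬ P (i + 1) := Nat.findGreatest_is_greatest (Nat.lt_succ_self i) hiltm
  have hxlt : x < QX (q (i + 1)) := by
    by_contra h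
    exact hnot ⟨le_trans hi1 (Nat.le_succ i), le_of_not_gt h⟩
  -- F_X x ≥ q i
  have hFXx : q i ≤ FX x := (hiffX i hi1 him x).mpr hPi.2
  -- F_Y x < q (β i)
  obtain ⟨hβ1, hβm, hβQ⟩ := hβ_mem i hi1 hiltm
  have hxY : x < QY (q (β i)) := lt_of_lt_of_le hxlt hβQ
  have hFYx : FY x < q (β i) := by
    by_contra h
    exact absurd ((hiffY (β i) hβ1 hβm x).mp (le_of_not_gt h)) (not_le.mpr hxY)
  have hle : q (β i) - q i ≤ εu := hεu.2 ⟨i, hi1, hiltm, rfl⟩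
  linarith
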